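/- For every s \ge 2: if the Graham conjecture holds for s (every subset B of \mathbb{N} \times \mathbb{N} with divergent sum of 1/(x^2+y^2) contains an s \times s axes-parallel grid), then the Erd\H{o}s-Tur\'an conjecture holds for k = 2s - 1 (every subset A of \mathbb{N} with divergent sum of reciprocals contains a (2s-1)-term arithmetic progression). -/

import Mathlib

open scoped ENNReal

theorem stmt6 (s : ℕ) (hs : 2 ≤ s)
    (graham : ∀ B : Set (ℕ × ℕ), (∀ p ∈ B, 0 < p.1 ∧ 0 < p.2) →
      (∑' p : B, (1 / ((p.1.1 : ℝ≥0∞) ^ 2 + (p.1.2 : ℝ≥0∞) ^ 2)) = ⊤) →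
      ∃ x y l : ℕ, 0 < l ∧ ∀ i j : ℕ, i ≤ s - 1 → j ≤ s - 1 →
        (x + i * l, y + j * l) ∈ B) :
    ∀ A : Set ℕ, (∀ a ∈ A, 0 < a) → (∑' a : A, (1 / (a : ℝ≥0∞)) = ⊤) →
      ∃ a d : ℕ, 0 < d ∧ ∀ t : ℕ, t ≤ 2 * s - 2 → a + t * d ∈ A := by
  classical
  intro A hApos hAsum
  set B : Set (ℕ × ℕ) := {p | 0 < p.1 ∧ 0 < p.2 ∧ p.1 + p.2 ∈ A} with hBdef
  have hBpos : ∀ p ∈ B, 0 < p.1 ∧ 0 < p.2 := fun p hp => ⟨hp.1, hp.2.1⟩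
  set f : ℕ × ℕ → ℝ≥0∞ := fun p => 1 / ((p.1 : ℝ≥0∞) ^ 2 + (p.2 : ℝ≥0∞) ^ 2) with hfdef
  set G : ℕ × ℕ → ℝ≥0∞ := fun p => Set.indicator B f p with hGdef
  -- fiber bound
  have key : ∀ a : ℕ, a ∈ A → 2 ≤ a → 1 / (a : ℝ≥0∞) ≤ 2 * ∑' x : ℕ, G (x, a - x) := by
    intro a ha ha2
    have ha0 : (a : ℝ≥0∞) ≠ 0 := by
      exact_mod_cast Nat.cast_ne_zero.mpr (by omega)
    have hat : (a : ℝ≥0∞) ≠ ⊤ := ENNReal.natCast_ne_top a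
    have hterm : ∀ x ∈ Finset.Ico 1 a, (1 / (a : ℝ≥0∞) ^ 2) ≤ G (x, a - x) := by
      intro x hx
      rw [Finset.mem_Ico] at hx
      have hmem : ((x, a - x) : ℕ × ℕ) ∈ B := by
        refine ⟨hx.1, by omega, ?_⟩
        have : x + (a - x) = a := by omega
        simpa [this] using ha
      rw [hGdef]
      simp only [Set.indicator_of_mem hmem]
      rw [hfdef]
      simp only
      rw [one_div, one_div]
      apply ENNReal.inv_le_inv.mpr
      have hnat : x ^ 2 + (a - x) ^ 2 ≤ a ^ 2 := by
        obtain ⟨y, hy⟩ : ∃ y, a = x + y := ⟨a - x, by omega⟩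
        subst hy
        have : x + y - x = y := by omega
        rw [this]
        nlinarith
      calc ((x : ℝ≥0∞) ^ 2 + ((a - x : ℕ) : ℝ≥0∞) ^ 2)
          = ((x ^ 2 + (a - x) ^ 2 : ℕ) : ℝ≥0∞) := by push_cast; ring
        _ ≤ ((a ^ 2 : ℕ) : ℝ≥0∞) := by exact_mod_cast hnat
        _ = (a : ℝ≥0∞) ^ 2 := by push_cast; ring
    have hfin : ((a - 1 : ℕ) : ℝ≥0∞) * (1 / (a : ℝ≥0∞) ^ 2) ≤ ∑' x : ℕ, G (x, a - x) := by
      calc ((a - 1 : ℕ) : ℝ≥0∞) * (1 / (a : ℝ≥0∞) ^ 2)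
          = ∑ x ∈ Finset.Ico 1 a, (1 / (a : ℝ≥0∞) ^ 2) := by
            rw [Finset.sum_const, Nat.card_Ico, nsmul_eq_mul]
        _ ≤ ∑ x ∈ Finset.Ico 1 a, G (x, a - x) := Finset.sum_le_sum hterm
        _ ≤ ∑' x : ℕ, G (x, a - x) := ENNReal.sum_le_tsum _
    calc 1 / (a : ℝ≥0∞)
        = (a : ℝ≥0∞) / (a : ℝ≥0∞) ^ 2 := by
          rw [pow_two]
          rw [show (a : ℝ≥0∞) / ((a : ℝ≥0∞) * a) = ((a : ℝ≥0∞) * 1) / ((a : ℝ≥0∞) * a) by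
            rw [mul_one]]
          rw [ENNReal.mul_div_mul_left _ _ ha0 hat]
      _ ≤ ((2 * (a - 1) : ℕ) : ℝ≥0∞) / (a : ℝ≥0∞) ^ 2 := by
          apply ENNReal.div_le_div_right
          exact_mod_cast (by omega : a ≤ 2 * (a - 1))
      _ = 2 * (((a - 1 : ℕ) : ℝ≥0∞) * (1 / (a : ℝ≥0∞) ^ 2)) := by
          rw [div_eq_mul_inv, one_div]
          push_cast
          ring
      _ ≤ 2 * ∑' x : ℕ, G (x, a - x) := by
          exact mul_le_mul_right hfin 2
  -- the double sum is at most the sum over B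
  have hdouble : ∑' a : ℕ, ∑' x : ℕ, G (x, a - x) ≤ ∑' p : ℕ × ℕ, G p := by
    set H : ℕ × ℕ → ℝ≥0∞ := fun q => G (q.2, q.1 - q.2) with hHdef
    have h1 : ∑' a : ℕ, ∑' x : ℕ, G (x, a - x) = ∑' q : ℕ × ℕ, H q :=
      (ENNReal.tsum_prod (f := fun a x => G (x, a - x))).symm
    rw [h1]
    set S : Set (ℕ × ℕ) := {q | q.2 < q.1} with hSdef
    have hsupp : Function.support H ⊆ S := by
      intro q hq
      by_contra hqS
      apply hq
      have : q.1 ≤ q.2 := by simpa [hSdef] using hqS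
      have hz : q.1 - q.2 = 0 := by omega
      rw [hHdef]
      simp only [hz]
      rw [hGdef]
      apply Set.indicator_of_notMem
      intro hmem
      exact absurd hmem.2.1 (by simp)
    rw [← tsum_subtype_eq_of_support_subset hsupp]
    have hinj : Function.Injective (fun q : S => ((q.1.2, q.1.1 - q.1.2) : ℕ × ℕ)) := by
      rintro ⟨⟨a, x⟩, ha⟩ ⟨⟨b, y⟩, hb⟩ h
      simp only [Prod.mk.injEq] at h
      have ha' : x < a := ha
      have hb' : y < b := hb
      have : a = b := by omega
      simp_all
    calc ∑' q : S, H q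
        = ∑' q : S, G ((fun q : S => ((q.1.2, q.1.1 - q.1.2) : ℕ × ℕ)) q) := rfl
      _ ≤ ∑' p : ℕ × ℕ, G p := ENNReal.tsum_comp_le_tsum_of_injective hinj _
  -- main divergence
  have hBsum : ∑' p : B, (1 / ((p.1.1 : ℝ≥0∞) ^ 2 + (p.1.2 : ℝ≥0∞) ^ 2)) = ⊤ := by
    have hG : ∑' p : B, (1 / ((p.1.1 : ℝ≥0∞) ^ 2 + (p.1.2 : ℝ≥0∞) ^ 2))
        = ∑' p : ℕ × ℕ, G p := by
      rw [hGdef, ← tsum_subtype B f]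
    rw [hG]
    by_contra hne
    have hTne : ∑' p : ℕ × ℕ, G p ≠ ⊤ := hne
    have hfin : (1 : ℝ≥0∞) + 2 * ∑' p : ℕ × ℕ, G p ≠ ⊤ := by
      apply ENNReal.add_ne_top.mpr
      exact ⟨ENNReal.one_ne_top, ENNReal.mul_ne_top (by simp) hTne⟩
    have hA' : ∑' a : ℕ, Set.indicator A (fun a => 1 / (a : ℝ≥0∞)) a = ⊤ := by
      rw [← tsum_subtype A (fun a => 1 / (a : ℝ≥0∞))]
      exact hAsum
    have hle : (∑' a : ℕ, Set.indicator A (fun a => 1 / (a : ℝ≥0∞)) a)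
        ≤ 1 + 2 * ∑' p : ℕ × ℕ, G p := by
      have step1 : ∀ a : ℕ, Set.indicator A (fun a => 1 / (a : ℝ≥0∞)) a
          ≤ (if a = 1 then 1 else 0) + 2 * ∑' x : ℕ, G (x, a - x) := by
        intro a
        by_cases ha : a ∈ A
        · rw [Set.indicator_of_mem ha]
          have hpos := hApos a ha
          rcases eq_or_lt_of_le (Nat.succ_le_of_lt hpos) with h1 | h2
          · have : a = 1 := by omega
            subst this
            simp
          · have h2' : 2 ≤ a := h2
            calc 1 / (a : ℝ≥0∞) ≤ 2 * ∑' x : ℕ, G (x, a - x) := key a ha h2'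
              _ ≤ (if a = 1 then 1 else 0) + 2 * ∑' x : ℕ, G (x, a - x) :=
                le_add_self
        · rw [Set.indicator_of_notMem ha]
          exact zero_le
      calc (∑' a : ℕ, Set.indicator A (fun a => 1 / (a : ℝ≥0∞)) a)
          ≤ ∑' a : ℕ, ((if a = 1 then 1 else 0) + 2 * ∑' x : ℕ, G (x, a - x)) :=
            ENNReal.tsum_le_tsum step1
        _ = (∑' a : ℕ, (if a = 1 then (1 : ℝ≥0∞) else 0))
            + 2 * ∑' a : ℕ, ∑' x : ℕ, G (x, a - x) := by
            rw [ENNReal.tsum_add, ENNReal.tsum_mul_left]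
        _ ≤ 1 + 2 * ∑' p : ℕ × ℕ, G p := by
            have h1 : (∑' a : ℕ, (if a = 1 then (1 : ℝ≥0∞) else 0)) = 1 := tsum_ite_eq 1 1
            rw [h1]
            exact add_le_add_right (mul_le_mul_right hdouble 2) 1
    rw [hA'] at hle
    exact hfin (top_le_iff.mp hle)
  obtain ⟨x, y, l, hl, hgrid⟩ := graham B hBpos hBsum
  refine ⟨x + y, l, hl, ?_⟩
  intro t ht
  have hi : min t (s - 1) ≤ s - 1 := min_le_right _ _
  have hj : t - min t (s - 1) ≤ s - 1 := by omega
  have hmem := hgrid (min t (s - 1)) (t - min t (s - 1)) hi hj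
  have hsum : (x + min t (s - 1) * l) + (y + (t - min t (s - 1)) * l) = x + y + t * l := by
    have : min t (s - 1) + (t - min t (s - 1)) = t := by omega
    calc (x + min t (s - 1) * l) + (y + (t - min t (s - 1)) * l)
        = x + y + (min t (s - 1) + (t - min t (s - 1))) * l := by ring
      _ = x + y + t * l := by rw [this]
  have := hmem.2.2
  rwa [hsum] at this
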